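/- Let X be a Tychonoff (completely regular Hausdorff) topological space with at least two points. Then X has exactly two points if and only if there exists an ideal I ∈ A(X) such that for every J ∈ A(X) with J ≠ I one has I·J = {0} (i.e., the annihilating-ideal graph of C(X) is a star graph). -/

import Mathlib

open Set

/-- `annIdeal I` is `Ann(I)`, the annihilator of the ideal `I` of `C(X, ℝ)`. -/
def annIdeal {X : Type*} [TopologicalSpace X] (I : Ideal C(X, ℝ)) : Ideal C(X, ℝ) where
  carrier := {g | ∀ f ∈ I, g * f = 0}
  add_mem' := by
    intro a b ha hb f hf
    rw [add_mul, ha f hf, hb f hf, add_zero]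
  zero_mem' := fun f _ => zero_mul f
  smul_mem' := by
    intro c g hg f hf
    rw [smul_eq_mul, mul_assoc, hg f hf, mul_zero]

/-- `annSet X` is `A(X)`: the set of nonzero ideals of `C(X, ℝ)` with nonzero annihilator. -/
def annSet (X : Type*) [TopologicalSpace X] : Set (Ideal C(X, ℝ)) :=
  {I | I ≠ ⊥ ∧ annIdeal I ≠ ⊥}

section Helpers

variable {X : Type*} [TopologicalSpace X]

lemma cm_exists_ne_zero {f : C(X, ℝ)} (h : f ≠ 0) : ∃ x, f x ≠ 0 := by
  by_contra hc
  push_neg at hc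
  exact h (ContinuousMap.ext fun x => hc x)

lemma mem_ann_span {a g : C(X, ℝ)} (h : g * a = 0) : g ∈ annIdeal (Ideal.span {a}) := by
  intro f hf
  obtain ⟨c, rfl⟩ := Ideal.mem_span_singleton'.mp hf
  rw [mul_comm c a, ← mul_assoc, h, zero_mul]

/-- Urysohn-type separation in a T3.5 space. -/
lemma urysohn {X : Type*} [TopologicalSpace X] [T35Space X] (p : X) (K : Set X)
    (hK : IsClosed K) (hp : p ∉ K) : ∃ u : C(X, ℝ), u p = 1 ∧ ∀ x ∈ K, u x = 0 := by
  obtain ⟨f, hfc, hfp, hfK⟩ := CompletelyRegularSpace.completely_regular p K hK hp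
  refine ⟨⟨fun x => 1 - (f x : ℝ), by fun_prop⟩, ?_, ?_⟩
  · simp [hfp]
  · intro x hx
    have : f x = 1 := hfK hx
    simp [this]

end Helpers

/-- A Tychonoff space `X` with at least two points has exactly two points iff the
annihilating-ideal graph of `C(X)` is a star graph, i.e. some vertex `I ∈ A(X)` is adjacent
to every other vertex. -/
theorem two_points_iff_star {X : Type*} [TopologicalSpace X] [T35Space X] [Nontrivial X] :
    (∃ p q : X, p ≠ q ∧ ∀ x : X, x = p ∨ x = q) ↔
      ∃ I ∈ annSet X, ∀ J ∈ annSet X, J ≠ I → I * J = ⊥ := by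
  constructor
  · rintro ⟨p, q, hpq, hall⟩
    classical
    -- The space is discrete
    have hdisc : DiscreteTopology X := by
      apply discreteTopology_iff_isOpen_singleton.mpr
      intro a
      rcases hall a with rfl | rfl
      · have h : ({a} : Set X) = ({q} : Set X)ᶜ := by
          ext x
          simp only [mem_singleton_iff, mem_compl_iff]
          constructor
          · rintro rfl; exact hpq
          · intro hx; exact (hall x).resolve_right hx
        rw [h]
        exact (isClosed_singleton).isOpen_compl
      · have h : ({a} : Set X) = ({p} : Set X)ᶜ := by
          ext x
          simp only [mem_singleton_iff, mem_compl_iff]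
          constructor
          · rintro rfl; exact hpq.symm
          · intro hx; exact (hall x).resolve_left hx
        rw [h]
        exact (isClosed_singleton).isOpen_compl
    have hcont : ∀ φ : X → ℝ, Continuous φ := fun φ => continuous_of_discreteTopology
    set ep : C(X, ℝ) := ⟨fun x => if x = p then 1 else 0, hcont _⟩ with hep
    set eq' : C(X, ℝ) := ⟨fun x => if x = q then 1 else 0, hcont _⟩ with heq'
    have hepp : ep p = 1 := by simp [hep]
    have hepq : ep q = 0 := by simp [hep, hpq.symm]
    have heqq : eq' q = 1 := by simp [heq']
    have heqp : eq' p = 0 := by simp [heq', hpq]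
    have hepne : ep ≠ 0 := by
      intro h
      have := DFunLike.congr_fun h p
      rw [hepp] at this
      simpa using this
    have heqne : eq' ≠ 0 := by
      intro h
      have := DFunLike.congr_fun h q
      rw [heqq] at this
      simpa using this
    have hmul : eq' * ep = 0 := by
      ext x
      rcases hall x with rfl | rfl
      · simp [heqp]
      · simp [hepq]
    refine ⟨Ideal.span {ep}, ⟨?_, ?_⟩, ?_⟩
    · rw [Ne, Ideal.span_singleton_eq_bot]
      exact hepne
    · exact (Submodule.ne_bot_iff _).mpr ⟨eq', mem_ann_span hmul, heqne⟩
    · intro J hJ hJI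
      obtain ⟨g, hgann, hgne⟩ := (Submodule.ne_bot_iff _).mp hJ.2
      by_cases hgp : g p ≠ 0
      · -- everything in J vanishes at p; product is zero
        have hvan : ∀ j ∈ J, j p = 0 := by
          intro j hj
          have h0 := hgann j hj
          have := DFunLike.congr_fun h0 p
          rw [ContinuousMap.mul_apply] at this
          simpa using (mul_eq_zero.mp this).resolve_left hgp
        rw [eq_bot_iff]
        apply (Ideal.mul_le).mpr
        intro a ha b hb
        rw [Ideal.mem_bot]
        obtain ⟨c, rfl⟩ := Ideal.mem_span_singleton'.mp ha
        ext x
        rcases hall x with rfl | rfl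
        · simp [hvan b hb]
        · simp [hepq]
      · -- g q ≠ 0, so J = I, contradiction
        push_neg at hgp
        obtain ⟨x0, hx0⟩ := cm_exists_ne_zero hgne
        have hgq : g q ≠ 0 := by
          rcases hall x0 with rfl | rfl
          · exact absurd hgp hx0
          · exact hx0
        have hvanq : ∀ j ∈ J, j q = 0 := by
          intro j hj
          have h0 := hgann j hj
          have := DFunLike.congr_fun h0 q
          rw [ContinuousMap.mul_apply] at this
          simpa using (mul_eq_zero.mp this).resolve_left hgq
        obtain ⟨j0, hj0J, hj0ne⟩ := (Submodule.ne_bot_iff _).mp hJ.1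
        obtain ⟨x1, hx1⟩ := cm_exists_ne_zero hj0ne
        have hj0p : j0 p ≠ 0 := by
          rcases hall x1 with rfl | rfl
          · exact hx1
          · exact absurd (hvanq j0 hj0J) hx1
        exfalso
        apply hJI
        apply le_antisymm
        · intro j hj
          apply Ideal.mem_span_singleton'.mpr
          refine ⟨ContinuousMap.const X (j p), ?_⟩
          ext x
          rcases hall x with rfl | rfl
          · simp [hepp]
          · simp [hepq, hvanq j hj]
        · rw [Ideal.span_le, Set.singleton_subset_iff]
          have hepj : ep = ContinuousMap.const X (j0 p)⁻¹ * j0 := by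
            ext x
            rcases hall x with rfl | rfl
            · simp [hepp, inv_mul_cancel₀ hj0p]
            · simp [hepq, hvanq j0 hj0J]
          rw [hepj]
          exact SetLike.mem_coe.mpr (J.mul_mem_left _ hj0J)
  · rintro ⟨I, ⟨hI0, hIann⟩, hstar⟩
    obtain ⟨g, hgann, hgne⟩ := (Submodule.ne_bot_iff _).mp hIann
    obtain ⟨f, hfI, hfne⟩ := (Submodule.ne_bot_iff _).mp hI0
    obtain ⟨q, hq⟩ := cm_exists_ne_zero hfne
    obtain ⟨p, hp⟩ := cm_exists_ne_zero hgne
    have hIp : ∀ a ∈ I, a p = 0 := by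
      intro a ha
      have h0 := hgann a ha
      have := DFunLike.congr_fun h0 p
      rw [ContinuousMap.mul_apply] at this
      simpa using (mul_eq_zero.mp this).resolve_left hp
    have hpq : p ≠ q := by
      rintro rfl
      exact hq (hIp f hfI)
    refine ⟨p, q, hpq, ?_⟩
    by_contra hcon
    push_neg at hcon
    obtain ⟨r, hrp, hrq⟩ := hcon
    by_cases hbig : ∃ f' ∈ I, ∃ x y : X, x ≠ y ∧ f' x ≠ 0 ∧ f' y ≠ 0
    · -- Subcase 1
      obtain ⟨f', hf'I, x, y, hxy, hx, hy⟩ := hbig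
      obtain ⟨u, hux, huy⟩ := urysohn x {y} isClosed_singleton (by simpa using hxy)
      have huy0 : u y = 0 := huy y rfl
      set J := Ideal.span {f' * u} with hJdef
      have hfu : (f' * u) ∈ J := Ideal.subset_span rfl
      have hfune : f' * u ≠ 0 := by
        intro h
        have := DFunLike.congr_fun h x
        rw [ContinuousMap.mul_apply, hux, mul_one] at this
        exact hx (by simpa using this)
      have hJA : J ∈ annSet X := by
        constructor
        · rw [hJdef, Ne, Ideal.span_singleton_eq_bot]
          exact hfune
        · apply (Submodule.ne_bot_iff _).mpr
          refine ⟨g, mem_ann_span ?_, hgne⟩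
          rw [← mul_assoc, hgann f' hf'I, zero_mul]
      have hJI : J ≠ I := by
        intro h
        have hf'J : f' ∈ J := h ▸ hf'I
        obtain ⟨c, hc⟩ := Ideal.mem_span_singleton'.mp hf'J
        have := DFunLike.congr_fun hc y
        rw [ContinuousMap.mul_apply, ContinuousMap.mul_apply, huy0, mul_zero, mul_zero] at this
        exact hy this.symm
      have hbot := hstar J hJA hJI
      have hmem : f' * (f' * u) ∈ I * J := Ideal.mul_mem_mul hf'I hfu
      rw [hbot, Ideal.mem_bot] at hmem
      have := DFunLike.congr_fun hmem x
      rw [ContinuousMap.mul_apply, ContinuousMap.mul_apply, hux, mul_one] at this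
      exact hx (mul_self_eq_zero.mp (by simpa using this))
    · -- Subcase 2
      push_neg at hbig
      have hone : ∀ a ∈ I, ∀ x : X, x ≠ q → a x = 0 := by
        intro a ha x hx
        by_contra hax
        by_cases haq : a q = 0
        · have hfx : f x = 0 := by
            by_contra hfx0
            exact hq (hbig f hfI x q hx hfx0)
          have hbI : f + a ∈ I := I.add_mem hfI ha
          have hbx : (f + a) x ≠ 0 := by
            rw [ContinuousMap.add_apply, hfx, zero_add]; exact hax
          have := hbig (f + a) hbI x q hx hbx
          rw [ContinuousMap.add_apply, haq, add_zero] at this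
          exact hq this
        · exact hax (hbig a ha q x (Ne.symm hx) haq)
      have hKqr : IsClosed ({q, r} : Set X) := ((Set.finite_singleton r).insert q).isClosed
      have hKpq : IsClosed ({p, q} : Set X) := ((Set.finite_singleton q).insert p).isClosed
      obtain ⟨u, hup, huK⟩ := urysohn p {q, r} hKqr (by simp [hpq, Ne.symm hrp])
      obtain ⟨v, hvr, hvK⟩ := urysohn r {p, q} hKpq (by simp [hrp, hrq])
      set s : C(X, ℝ) := u - v with hs
      set w : C(X, ℝ) := s ⊔ 0 with hw
      set h : C(X, ℝ) := (-s) ⊔ 0 with hh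
      have hwx : ∀ x, w x = max (s x) 0 := fun x => rfl
      have hhx : ∀ x, h x = max (-(s x)) 0 := fun x => rfl
      have hwh : ∀ x, w x * h x = 0 := by
        intro x
        rw [hwx, hhx]
        rcases le_total (s x) 0 with hle | hle
        · have h1 : max (s x) 0 = 0 := max_eq_right hle
          rw [h1, zero_mul]
        · have h2 : max (-(s x)) 0 = 0 := max_eq_right (neg_nonpos.mpr hle)
          rw [h2, mul_zero]
      have hsp : s p = 1 := by
        rw [hs]; simp [hup, hvK p (by simp)]
      have hsq : s q = 0 := by
        rw [hs]; simp [huK q (by simp), hvK q (by simp)]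
      have hsr : s r = -1 := by
        rw [hs]; simp [huK r (by simp), hvr]
      have hwp : w p = 1 := by rw [hwx, hsp]; norm_num
      have hwq : w q = 0 := by rw [hwx, hsq]; norm_num
      have hhr : h r = 1 := by rw [hhx, hsr]; norm_num
      have hhq : h q = 0 := by rw [hhx, hsq]; norm_num
      set J := Ideal.span {f + h} with hJdef
      have hfhr : (f + h) r = 1 := by
        rw [ContinuousMap.add_apply, hone f hfI r hrq, hhr, zero_add]
      have hfhne : f + h ≠ 0 := by
        intro he
        have := DFunLike.congr_fun he r
        rw [hfhr] at this
        simpa using this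
      have hwfh : w * (f + h) = 0 := by
        ext x
        rw [ContinuousMap.mul_apply, ContinuousMap.add_apply]
        by_cases hxq : x = q
        · subst hxq
          rw [hwq, zero_mul]
          rfl
        · rw [hone f hfI x hxq, zero_add, hwh x]
          rfl
      have hJA : J ∈ annSet X := by
        constructor
        · rw [hJdef, Ne, Ideal.span_singleton_eq_bot]
          exact hfhne
        · apply (Submodule.ne_bot_iff _).mpr
          refine ⟨w, mem_ann_span hwfh, ?_⟩
          intro he
          have := DFunLike.congr_fun he p
          rw [hwp] at this
          simpa using this
      have hJI : J ≠ I := by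
        intro he
        have : f + h ∈ I := he ▸ Ideal.subset_span rfl
        have := hone _ this r hrq
        rw [hfhr] at this
        simpa using this
      have hbot := hstar J hJA hJI
      have hmem : f * (f + h) ∈ I * J := Ideal.mul_mem_mul hfI (Ideal.subset_span rfl)
      rw [hbot, Ideal.mem_bot] at hmem
      have := DFunLike.congr_fun hmem q
      rw [ContinuousMap.mul_apply, ContinuousMap.add_apply, hhq, add_zero] at this
      exact hq (mul_self_eq_zero.mp (by simpa using this))
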